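/- At a maximum point of the difference of two resolvent solutions, the difference is bounded by the difference of the data: if i* maximizes u − v over the finite state space, then (u − v)(i*) ≤ (f − g)(i*). -/
import Mathlib

open Finset

/-- At a maximum point `i*` of `u - v`, the difference of two resolvent solutions
is bounded by the difference of the data: `(u - v)(i*) ≤ (f - g)(i*)`. -/
theorem stmt_12 {S ι : Type*} [Fintype S]
    (h Δt : ℝ) (hh : 0 < h) (hΔt : 0 < Δt)
    (J : S → Finset ι) (c : ι → S → ℝ) (T : ι → S → S)
    (hc : ∀ i, ∀ j ∈ J i, 0 ≤ c j i)
    (u v f g : S → ℝ)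
    (hu : ∀ i, u i - Δt * ∑ j ∈ J i, c j i * (Real.exp ((u (T j i) - u i) / h) - 1) = f i)
    (hv : ∀ i, v i - Δt * ∑ j ∈ J i, c j i * (Real.exp ((v (T j i) - v i) / h) - 1) = g i)
    (istar : S) (hmax : ∀ i, u i - v i ≤ u istar - v istar) :
    u istar - v istar ≤ f istar - g istar := by
  have hsum : ∑ j ∈ J istar, c j istar * (Real.exp ((u (T j istar) - u istar) / h) - 1)
      ≤ ∑ j ∈ J istar, c j istar * (Real.exp ((v (T j istar) - v istar) / h) - 1) := by
    refine Finset.sum_le_sum fun j hj => ?_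
    have hle : (u (T j istar) - u istar) / h ≤ (v (T j istar) - v istar) / h := by
      have := hmax (T j istar)
      exact div_le_div_of_nonneg_right (by linarith [hmax (T j istar)]) hh.le
    have := Real.exp_le_exp.mpr hle
    have := hc istar j hj
    nlinarith
  have h1 := hu istar
  have h2 := hv istar
  nlinarith
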